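/- Complementary tight frame of equiangular lines: let v_1, …, v_n ∈ ℍ^d, n > d, be unit vectors with |⟨v_j, v_k⟩|² = λ := (n−d)/(d(n−1)) for all j ≠ k, and suppose V·Vᴴ = (n/d)·I_d where V = [v_1,…,v_n]. Let G := Vᴴ·V and define G_c := (n/(n−d))·I_n − (d/(n−d))·G. Then ((n−d)/n)·G_c is Hermitian and idempotent with Re(trace) = n − d, every diagonal entry of G_c equals 1, and |(G_c)_{jk}|² = d/((n−d)(n−1)) for all j ≠ k; hence G_c is the Gramian of an equiangular tight frame of n unit vectors for ℍ^{n−d} with angle λ_c = d/((n−d)(n−1)). -/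

import Mathlib

open Quaternion Matrix BigOperators

/-- Euclidean inner product on `ℍ^d`: `⟨v,w⟩ = ∑ i, conj (w i) * v i`
(linear in the first variable). -/
noncomputable def qip {d : ℕ} (v w : Fin d → ℍ[ℝ]) : ℍ[ℝ] :=
  ∑ i, star (w i) * v i

/-- Squared Euclidean norm on `ℍ^d`, a nonnegative real. -/
noncomputable def nsq {d : ℕ} (v : Fin d → ℍ[ℝ]) : ℝ :=
  ∑ i, Quaternion.normSq (v i)

/-- Complementary tight frame of equiangular lines: if `v_1, …, v_n ∈ ℍ^d`, `n > d`,
are equiangular unit vectors at angle `λ = (n−d)/(d(n−1))` forming a tight frame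
(`V Vᴴ = (n/d) I_d`), and `G = Vᴴ V`, `G_c = (n/(n−d)) I_n − (d/(n−d)) G`, then
`((n−d)/n) G_c` is Hermitian idempotent with real trace `n − d`, the diagonal
entries of `G_c` are `1`, and `|(G_c)_{jk}|² = d/((n−d)(n−1))` for `j ≠ k`;
thus `G_c` is the Gramian of an equiangular tight frame of `n` unit vectors for
`ℍ^{n−d}` with angle `λ_c = d/((n−d)(n−1))`. -/
theorem complementary_tight_frame_equiangular (d n : ℕ) (hdn : d < n)
    (v : Fin n → (Fin d → ℍ[ℝ]))
    (hunit : ∀ j, nsq (v j) = 1)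
    (hequi : ∀ j k, j ≠ k →
      Quaternion.normSq (qip (v j) (v k)) = ((n : ℝ) - d) / (d * ((n : ℝ) - 1)))
    (htight : (Matrix.of fun i j => v j i) * (Matrix.of fun i j => v j i)ᴴ =
      ((n : ℝ) / (d : ℝ)) • (1 : Matrix (Fin d) (Fin d) ℍ[ℝ])) :
    let G : Matrix (Fin n) (Fin n) ℍ[ℝ] :=
      (Matrix.of fun i j => v j i)ᴴ * (Matrix.of fun i j => v j i)
    let Gc : Matrix (Fin n) (Fin n) ℍ[ℝ] :=
      ((n : ℝ) / ((n : ℝ) - d)) • (1 : Matrix (Fin n) (Fin n) ℍ[ℝ]) -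
        ((d : ℝ) / ((n : ℝ) - d)) • G
    let Q : Matrix (Fin n) (Fin n) ℍ[ℝ] := (((n : ℝ) - d) / (n : ℝ)) • Gc
    Qᴴ = Q ∧ Q * Q = Q ∧ (Q.trace).re = (n : ℝ) - d ∧
    (∀ j, Gc j j = 1) ∧
    (∀ j k, j ≠ k →
      Quaternion.normSq (Gc j k) = (d : ℝ) / (((n : ℝ) - d) * ((n : ℝ) - 1))) := by
  intro G Gc Q
  set V : Matrix (Fin d) (Fin n) ℍ[ℝ] := Matrix.of fun i j => v j i with hV
  have hd0 : (d : ℝ) ≠ 0 := by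
    have : d ≠ 0 := by
      rintro rfl
      have h := hunit ⟨0, Nat.lt_of_le_of_lt (Nat.zero_le 0) hdn⟩
      simp [nsq] at h
    exact_mod_cast this
  have hn0 : (n : ℝ) ≠ 0 := by
    have : n ≠ 0 := (Nat.lt_of_le_of_lt (Nat.zero_le d) hdn).ne'
    exact_mod_cast this
  have hnd : (n : ℝ) - d ≠ 0 := by
    have : (d : ℝ) < n := by exact_mod_cast hdn
    linarith
  have hn1 : (n : ℝ) - 1 ≠ 0 := by
    have h1 : (1:ℝ) ≤ d := by
      have : 1 ≤ d := Nat.one_le_iff_ne_zero.mpr (by exact_mod_cast hd0)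
      exact_mod_cast this
    have : (d : ℝ) < n := by exact_mod_cast hdn
    linarith
  -- entries of G
  have hGentry : ∀ j k, G j k = qip (v k) (v j) := by
    intro j k
    simp [G, Matrix.mul_apply, Matrix.conjTranspose_apply, qip, hV]
  have hGdiag : ∀ j, G j j = 1 := by
    intro j
    have h : G j j = ((nsq (v j) : ℝ) : ℍ[ℝ]) := by
      rw [hGentry]
      simp only [qip, nsq]
      simp only [← Quaternion.algebraMap_def, map_sum]
      refine Finset.sum_congr rfl fun i _ => ?_
      rw [Quaternion.star_mul_self, Quaternion.algebraMap_def]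
    rw [h, hunit]
    simp
  -- Q = 1 - (d/n) • G
  have hQeq : Q = (1 : Matrix (Fin n) (Fin n) ℍ[ℝ]) - ((d : ℝ) / n) • G := by
    show (((n : ℝ) - d) / n) • (((n : ℝ) / ((n : ℝ) - d)) • (1 : Matrix (Fin n) (Fin n) ℍ[ℝ]) -
        ((d : ℝ) / ((n : ℝ) - d)) • G) = _
    rw [smul_sub, smul_smul, smul_smul,
      show ((n : ℝ) - d) / n * ((n : ℝ) / ((n : ℝ) - d)) = 1 by field_simp,
      show ((n : ℝ) - d) / n * ((d : ℝ) / ((n : ℝ) - d)) = (d : ℝ) / n by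
        field_simp,
      one_smul]
  -- G is Hermitian
  have hGherm : Gᴴ = G := by
    simp [G, Matrix.conjTranspose_mul]
  -- real-smul commutes with conjTranspose
  have hct : ∀ (r : ℝ) (M : Matrix (Fin n) (Fin n) ℍ[ℝ]), (r • M)ᴴ = r • Mᴴ := by
    intro r M
    apply Matrix.ext; intro i j
    simp only [Matrix.conjTranspose_apply, Matrix.smul_apply, Quaternion.star_smul]
  -- G * G = (n/d) • G
  have hGG : G * G = ((n : ℝ) / d) • G := by
    have h : G * G = Vᴴ * (V * Vᴴ) * V := by
      simp [G, Matrix.mul_assoc, hV]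
    rw [h, htight]
    simp [Matrix.smul_mul, Matrix.mul_smul, G, Matrix.mul_assoc, hV]
  refine ⟨?_, ?_, ?_, ?_, ?_⟩
  · rw [hQeq, Matrix.conjTranspose_sub, Matrix.conjTranspose_one, hct, hGherm]
  · rw [hQeq]
    simp only [sub_mul, mul_sub, one_mul, mul_one, Matrix.smul_mul, Matrix.mul_smul,
      smul_smul]
    rw [hGG, smul_smul,
      show (d : ℝ) / n * ((d : ℝ) / n) * ((n : ℝ) / d) = (d : ℝ) / n by field_simp]
    abel
  · have hQdiag : ∀ j, Q j j = 1 - ((d : ℝ) / n) • (1 : ℍ[ℝ]) := by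
      intro j
      rw [hQeq]
      simp [Matrix.sub_apply, Matrix.smul_apply, hGdiag, Matrix.one_apply]
    rw [Matrix.trace]
    simp only [Matrix.diag_apply, hQdiag]
    rw [Finset.sum_const]
    simp [Quaternion.re_smul, Quaternion.re_sub]
    field_simp
  · intro j
    show ((n : ℝ) / ((n : ℝ) - d)) • (1 : Matrix (Fin n) (Fin n) ℍ[ℝ]) j j -
        ((d : ℝ) / ((n : ℝ) - d)) • G j j = 1
    rw [hGdiag]
    simp only [Matrix.smul_apply, Matrix.one_apply_eq, smul_eq_mul]
    rw [← sub_smul, show (n : ℝ) / ((n : ℝ) - d) - (d : ℝ) / ((n : ℝ) - d) = 1 by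
      field_simp]
    simp
  · intro j k hjk
    have hGc : Gc j k = (-((d : ℝ) / ((n : ℝ) - d))) • G j k := by
      show ((n : ℝ) / ((n : ℝ) - d)) • (1 : Matrix (Fin n) (Fin n) ℍ[ℝ]) j k -
          ((d : ℝ) / ((n : ℝ) - d)) • G j k = _
      simp [Matrix.smul_apply, Matrix.one_apply_ne hjk, neg_smul]
    rw [hGc, Quaternion.normSq_smul, hGentry, hequi k j (Ne.symm hjk)]
    field_simp
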